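/- arXiv:1512.01351 — 6 statements merged into one kernel-verified Lean document; each statement's English description precedes it below -/
import Mathlib

section
/- Let K be a field of characteristic 0 and d ≥ 1. Equip R = K[x₁,…,x_d] × (K[x₁,…,x_d])^d with the commutative multiplication (g,c)·(h,c′) = (gh, (g c′_i + h c_i)_{i=1,…,d}) and the bracket [(g,c),(h,c′)] = (0, (c_i·E(h) − c′_i·E(g))_{i=1,…,d}), where E(h) = Σ_{j=1}^d x_j ∂h/∂x_j. Then the Leibniz rule holds: [u·v, w] = [u,w]·v + u·[v,w] for all u, v, w ∈ R; hence R is a Poisson algebra. -/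
open MvPolynomial

/-- The Euler operator `E(h) = Σ_j x_j ∂h/∂x_j`. -/
noncomputable def eulerOp {K : Type*} [Field K] {d : ℕ}
    (h : MvPolynomial (Fin d) K) : MvPolynomial (Fin d) K :=
  ∑ j : Fin d, X j * pderiv j h

/-- The bracket on `R = K[x₁,…,x_d] × (K[x₁,…,x_d])^d`:
`[(g,c),(h,c′)] = (0, (c_i·E(h) − c′_i·E(g))_i)`. -/
noncomputable def rdBracket {K : Type*} [Field K] {d : ℕ}
    (u v : MvPolynomial (Fin d) K × (Fin d → MvPolynomial (Fin d) K)) :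
    MvPolynomial (Fin d) K × (Fin d → MvPolynomial (Fin d) K) :=
  (0, fun i => u.2 i * eulerOp v.1 - v.2 i * eulerOp u.1)

/-- The commutative multiplication on `R`: `(g,c)·(h,c′) = (gh, (g c′_i + h c_i)_i)`,
the trivial square-zero extension of `K[x₁,…,x_d]` by its free module of rank `d`. -/
noncomputable def rdMul {K : Type*} [Field K] {d : ℕ}
    (u v : MvPolynomial (Fin d) K × (Fin d → MvPolynomial (Fin d) K)) :
    MvPolynomial (Fin d) K × (Fin d → MvPolynomial (Fin d) K) :=
  (u.1 * v.1, fun i => u.1 * v.2 i + v.1 * u.2 i)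

lemma eulerOp_mul {K : Type*} [Field K] {d : ℕ}
    (g h : MvPolynomial (Fin d) K) :
    eulerOp (g * h) = g * eulerOp h + h * eulerOp g := by
  simp only [eulerOp, Finset.mul_sum, ← Finset.sum_add_distrib, pderiv_mul]
  exact Finset.sum_congr rfl fun j _ => by ring

/-- The Leibniz rule `[u·v, w] = [u,w]·v + u·[v,w]` holds on `R`;
hence `R` is a Poisson algebra. -/
theorem stmt_4 {K : Type*} [Field K] [CharZero K] {d : ℕ} (hd : 1 ≤ d)
    (u v w : MvPolynomial (Fin d) K × (Fin d → MvPolynomial (Fin d) K)) :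
    rdBracket (rdMul u v) w = rdMul (rdBracket u w) v + rdMul u (rdBracket v w) := by
  ext i <;>
    simp only [rdBracket, rdMul, Prod.fst_add, Prod.snd_add, Pi.add_apply, eulerOp_mul] <;>
    ring
end

section
/- Let K be a field of characteristic 0 and let f ∈ K[x₀,x₁,x₂]. Suppose that for every matrix (a b; c d) ∈ SL₂(K), the substitution x₀ ↦ a²x₀ + 2ac x₁ + c²x₂, x₁ ↦ ab x₀ + (ad+bc) x₁ + cd x₂, x₂ ↦ b²x₀ + 2bd x₁ + d²x₂ fixes f. Then f lies in the K-subalgebra generated by the discriminant x₁² − x₀x₂, i.e., f = p(x₁² − x₀x₂) for some univariate polynomial p over K. (That is, K[X₃]^{SL₂(K)} = K[x₁² − x₀x₂] when KX₃ ≅ V₂.) -/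
open MvPolynomial

lemma comp_Xsq_inj {R : Type*} [CommRing R] [IsDomain R] {q r : Polynomial R}
    (h : q.comp (Polynomial.X ^ 2) = r.comp (Polynomial.X ^ 2)) : q = r := by
  have hs : (q - r).comp (Polynomial.X ^ 2) = 0 := by
    rw [Polynomial.sub_comp, h, sub_self]
  by_contra hne
  have hqr : q - r ≠ 0 := sub_ne_zero.mpr hne
  have hdeg : ((q - r).comp (Polynomial.X ^ 2)).natDegree
      = (q - r).natDegree * 2 := by
    rw [Polynomial.natDegree_comp, Polynomial.natDegree_X_pow]
  rw [hs, Polynomial.natDegree_zero] at hdeg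
  have h0 : (q - r).natDegree = 0 := by omega
  obtain ⟨a, ha⟩ := Polynomial.natDegree_eq_zero.mp h0
  rw [← ha, Polynomial.C_comp] at hs
  exact hqr (by rw [← ha, hs])

lemma phi_inj {K : Type*} [Field K] :
    Function.Injective (aeval ![X 0 ^ 2, X 1, X 2] :
      MvPolynomial (Fin 3) K →ₐ[K] MvPolynomial (Fin 3) K) := by
  intro f g h
  set e := MvPolynomial.finSuccEquiv K 2 with he
  set Φ : Polynomial (MvPolynomial (Fin 2) K) →ₐ[K]
      Polynomial (MvPolynomial (Fin 2) K) :=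
    (Polynomial.aeval (Polynomial.X ^ 2)).restrictScalars K with hΦ
  have key : (e.toAlgHom.comp (aeval ![X 0 ^ 2, X 1, X 2])) = Φ.comp e.toAlgHom := by
    apply MvPolynomial.algHom_ext
    intro i
    refine Fin.cases ?_ (fun j => ?_) i
    · simp [he, hΦ, MvPolynomial.finSuccEquiv_X_zero]
    · have hv : (![X 0 ^ 2, X 1, X 2] : Fin 3 → MvPolynomial (Fin 3) K) j.succ
          = X j.succ := by fin_cases j <;> rfl
      simp [he, hΦ, hv, MvPolynomial.finSuccEquiv_X_succ]
  have h2 : Φ (e f) = Φ (e g) := by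
    calc Φ (e f) = (e.toAlgHom.comp (aeval ![X 0 ^ 2, X 1, X 2])) f := by
          rw [key]; rfl
      _ = (e.toAlgHom.comp (aeval ![X 0 ^ 2, X 1, X 2])) g := by
          simp only [AlgHom.coe_comp, AlgEquiv.toAlgHom_eq_coe, AlgHom.coe_coe,
            Function.comp_apply, h]
      _ = Φ (e g) := by rw [key]; rfl
  have h3 : (e f).comp (Polynomial.X ^ 2) = (e g).comp (Polynomial.X ^ 2) := by
    simpa [hΦ, Polynomial.aeval_def, Polynomial.comp] using h2
  exact e.injective (comp_Xsq_inj h3)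

lemma aeval_eq_eval' {σ K : Type*} [CommSemiring K] (x : σ → K)
    (g : MvPolynomial σ K) : aeval x g = eval x g := by
  rw [← coe_aeval_eq_eval]; rfl

lemma eval_aeval' {K : Type*} [CommSemiring K] {n m : ℕ}
    (x : Fin m → K) (v : Fin n → MvPolynomial (Fin m) K)
    (g : MvPolynomial (Fin n) K) :
    eval x (aeval v g) = eval (fun i => eval x (v i)) g := by
  rw [← aeval_eq_eval' x, comp_aeval_apply]
  simp only [aeval_eq_eval']

/-- `K[X₃]^{SL₂(K)} = K[x₁² − x₀x₂]` when `KX₃ ≅ V₂`: a polynomial fixed by every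
`SL₂(K)`-substitution on the coefficients of a binary quadratic form is a polynomial
in the discriminant `x₁² − x₀x₂`. -/
theorem stmt_11 {K : Type*} [Field K] [CharZero K] (f : MvPolynomial (Fin 3) K)
    (hf : ∀ a b c d : K, a * d - b * c = 1 →
      aeval ![C (a ^ 2) * X 0 + C (2 * a * c) * X 1 + C (c ^ 2) * X 2,
              C (a * b) * X 0 + C (a * d + b * c) * X 1 + C (c * d) * X 2,
              C (b ^ 2) * X 0 + C (2 * b * d) * X 1 + C (d ^ 2) * X 2] f = f) :
    ∃ p : Polynomial K,
      f = Polynomial.aeval ((X 1) ^ 2 - X 0 * X 2 : MvPolynomial (Fin 3) K) p := by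
  classical
  set p : Polynomial K := aeval ![1, 0, -Polynomial.X] f with hp
  have hpval : ∀ D : K, Polynomial.eval D p = eval ![1, 0, -D] f := by
    intro D
    have h1 : Polynomial.eval D p = Polynomial.aeval D p := by
      rw [← Polynomial.coe_aeval_eq_eval]
    have h2 := comp_aeval_apply (f := ![(1 : Polynomial K), 0, -Polynomial.X])
      (Polynomial.aeval D) f
    rw [h1, hp, h2]
    have hvv : (fun i => (Polynomial.aeval D) (![(1 : Polynomial K), 0, -Polynomial.X] i))
        = ![(1 : K), 0, -D] := by
      funext i; fin_cases i <;> simp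
    rw [hvv, aeval_eq_eval']
  have key : ∀ x : Fin 3 → K, x 0 ≠ 0 →
      eval ![x 0 ^ 2, x 1, x 2] f
        = Polynomial.eval (x 1 ^ 2 - x 0 ^ 2 * x 2) p := by
    intro x hx
    have det : x 0 * (x 0)⁻¹ - x 1 / x 0 * 0 = 1 := by field_simp; ring
    have H := congrArg (eval ![1, 0, -(x 1 ^ 2 - x 0 ^ 2 * x 2)])
      (hf (x 0) (x 1 / x 0) 0 (x 0)⁻¹ det)
    rw [eval_aeval'] at H
    rw [hpval, ← H]
    exact congrArg (fun v => eval v f)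
      (by funext i; fin_cases i <;> (simp; (try field_simp)) <;> ring)
  set V : Fin 3 → MvPolynomial (Fin 3) K := ![X 0 ^ 2, X 1, X 2] with hV
  have main : aeval V f
      = aeval V
          (Polynomial.aeval ((X 1) ^ 2 - X 0 * X 2 : MvPolynomial (Fin 3) K) p) := by
    have hq : aeval V
        (Polynomial.aeval ((X 1) ^ 2 - X 0 * X 2 : MvPolynomial (Fin 3) K) p)
        = Polynomial.aeval ((X 1) ^ 2 - X 0 ^ 2 * X 2 : MvPolynomial (Fin 3) K) p := by
      have h3 := Polynomial.aeval_algHom_apply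
        (aeval V :
          MvPolynomial (Fin 3) K →ₐ[K] MvPolynomial (Fin 3) K)
        ((X 1) ^ 2 - X 0 * X 2 : MvPolynomial (Fin 3) K) p
      have hd : (aeval V) ((X 1 : MvPolynomial (Fin 3) K) ^ 2 - X 0 * X 2)
          = (X 1 : MvPolynomial (Fin 3) K) ^ 2 - X 0 ^ 2 * X 2 := by
        simp [hV]
      rw [hd] at h3
      exact h3.symm
    rw [hq]
    have hmul : (X 0 : MvPolynomial (Fin 3) K) *
        (aeval V f
          - Polynomial.aeval ((X 1) ^ 2 - X 0 ^ 2 * X 2 : MvPolynomial (Fin 3) K) p)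
        = 0 := by
      apply MvPolynomial.funext
      intro x
      simp only [map_zero, map_mul, map_sub, eval_X]
      by_cases hx : x 0 = 0
      · rw [hx, zero_mul]
      · have h1 : eval x (aeval V f)
            = eval ![x 0 ^ 2, x 1, x 2] f := by
          rw [eval_aeval']
          exact congrArg (fun v => eval v f)
            (by funext i; fin_cases i <;> simp [hV])
        have h2 : eval x
            (Polynomial.aeval ((X 1) ^ 2 - X 0 ^ 2 * X 2 : MvPolynomial (Fin 3) K) p)
            = Polynomial.eval (x 1 ^ 2 - x 0 ^ 2 * x 2) p := by
          have h3 := Polynomial.aeval_algHom_apply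
            (aeval x : MvPolynomial (Fin 3) K →ₐ[K] K)
            ((X 1) ^ 2 - X 0 ^ 2 * X 2 : MvPolynomial (Fin 3) K) p
          rw [← aeval_eq_eval' x, ← h3, ← Polynomial.coe_aeval_eq_eval]
          congr 1
          simp [aeval_eq_eval']
        rw [h1, h2, key x hx, sub_self, mul_zero]
    rcases mul_eq_zero.mp hmul with h | h
    · exact absurd h (MvPolynomial.X_ne_zero 0)
    · exact sub_eq_zero.mp h
  exact ⟨p, phi_inj main⟩
end

section
/- Let K be a field of characteristic 0 and let f ∈ K[x₀,x₁,x₂,x₃]. Suppose that for every matrix (a b; c d) ∈ SL₂(K), the substitution x₀ ↦ a x₀ + c x₁, x₁ ↦ b x₀ + d x₁, x₂ ↦ a x₂ + c x₃, x₃ ↦ b x₂ + d x₃ fixes f. Then f lies in the K-subalgebra generated by x₀x₃ − x₁x₂, i.e., f = p(x₀x₃ − x₁x₂) for some univariate polynomial p over K. (That is, K[X₄]^{SL₂(K)} = K[x₀x₃ − x₁x₂] when KX₄ ≅ V₁ ⊕ V₁.) -/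
open MvPolynomial

/-- Evaluating a linear substitution then a point is evaluation at the moved point. -/
lemma stmt12_aux {K : Type*} [Field K] (y : Fin 4 → K) (a b c d : K) :
    (fun i => (aeval y : MvPolynomial (Fin 4) K →ₐ[K] K)
      (![C a * X 0 + C c * X 1, C b * X 0 + C d * X 1,
         C a * X 2 + C c * X 3, C b * X 2 + C d * X 3] i))
    = ![a * y 0 + c * y 1, b * y 0 + d * y 1, a * y 2 + c * y 3, b * y 2 + d * y 3] := by
  funext i
  fin_cases i <;> simp

/-- `K[X₄]^{SL₂(K)} = K[x₀x₃ − x₁x₂]` when `KX₄ ≅ V₁ ⊕ V₁`: a polynomial fixed by every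
`SL₂(K)`-substitution acting diagonally on the two pairs `{x₀,x₁}` and `{x₂,x₃}` of
binary linear forms is a polynomial in `x₀x₃ − x₁x₂`. -/
theorem stmt_12 {K : Type*} [Field K] [CharZero K] (f : MvPolynomial (Fin 4) K)
    (hf : ∀ a b c d : K, a * d - b * c = 1 →
      aeval ![C a * X 0 + C c * X 1, C b * X 0 + C d * X 1,
              C a * X 2 + C c * X 3, C b * X 2 + C d * X 3] f = f) :
    ∃ p : Polynomial K,
      f = Polynomial.aeval (X 0 * X 3 - X 1 * X 2 : MvPolynomial (Fin 4) K) p := by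
  set D : MvPolynomial (Fin 4) K := X 0 * X 3 - X 1 * X 2 with hD
  set p : Polynomial K := aeval ![1, 0, 0, Polynomial.X] f with hp
  refine ⟨p, ?_⟩
  have hDne : D ≠ 0 := by
    intro h
    have := congrArg (eval ![(1:K), 0, 0, 1]) h
    simp [hD] at this
  have key : ∀ y : Fin 4 → K, eval y (f * D) = eval y (Polynomial.aeval D p * D) := by
    intro y
    rw [map_mul, map_mul]
    by_cases h : eval y D = 0
    · rw [h, mul_zero, mul_zero]
    · congr 1
      have h0 : y 0 * y 3 - y 1 * y 2 ≠ 0 := by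
        intro h0; apply h; simp [hD, h0]
      set e : K := y 0 * y 3 - y 1 * y 2 with he
      have heD : eval y D = e := by simp [hD, he]
      have hc : (y 3 / e) * (y 0) - (- y 1) * (- y 2 / e) = 1 := by
        field_simp
        ring
      have h1 := hf (y 3 / e) (- y 1) (- y 2 / e) (y 0) hc
      have h2 := congrArg (aeval y : MvPolynomial (Fin 4) K →ₐ[K] K) h1
      rw [comp_aeval_apply, stmt12_aux y (y 3 / e) (- y 1) (- y 2 / e) (y 0)] at h2
      have hvec : ![(y 3 / e) * y 0 + (- y 2 / e) * y 1, (- y 1) * y 0 + (y 0) * y 1,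
          (y 3 / e) * y 2 + (- y 2 / e) * y 3, (- y 1) * y 2 + (y 0) * y 3]
          = ![(1:K), 0, 0, e] := by
        funext i
        fin_cases i
        · show (y 3 / e) * y 0 + (- y 2 / e) * y 1 = 1
          rw [div_mul_eq_mul_div, div_mul_eq_mul_div, ← add_div,
            div_eq_one_iff_eq h0, he]
          ring
        · show (- y 1) * y 0 + (y 0) * y 1 = 0
          ring
        · show (y 3 / e) * y 2 + (- y 2 / e) * y 3 = 0
          rw [div_mul_eq_mul_div, div_mul_eq_mul_div, ← add_div, div_eq_iff h0]
          ring
        · show (- y 1) * y 2 + (y 0) * y 3 = e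
          rw [he]; ring
      rw [hvec] at h2
      have h3 : eval y (Polynomial.aeval D p) = Polynomial.aeval e p := by
        rw [← heD, ← coe_aeval_eq_eval]
        exact (Polynomial.aeval_algHom_apply (aeval y : MvPolynomial (Fin 4) K →ₐ[K] K) D p).symm
      have h4 : Polynomial.aeval e p = aeval ![(1:K), 0, 0, e] f := by
        rw [hp, comp_aeval_apply]
        have hv2 : (fun i => Polynomial.aeval e
            ((![1, 0, 0, Polynomial.X] : Fin 4 → Polynomial K) i)) = ![(1:K), 0, 0, e] := by
          funext i
          fin_cases i <;> simp
        rw [hv2]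
      have h5 : eval y f = aeval y f := by rw [← coe_aeval_eq_eval]; rfl
      rw [h3, h4, h5, ← h2]
  have hmul : f * D = Polynomial.aeval D p * D := MvPolynomial.funext key
  exact mul_right_cancel₀ hDne hmul
end

section
/- Let K be a field of characteristic 0 and let c = (c₀, c₁) be a pair of polynomials in K[x₀,x₁] such that x₀c₀ + x₁c₁ = 0 and such that for every (a b; c d) ∈ SL₂(K), writing σ for the substitution x₀ ↦ a x₀ + c x₁, x₁ ↦ b x₀ + d x₁, one has a·σ(c₀) + b·σ(c₁) = c₀ and c·σ(c₀) + d·σ(c₁) = c₁. Then there exists λ ∈ K with c₀ = −λ x₁ and c₁ = λ x₀. (That is, when KX₂ ≅ V₁, the space (F₂′)^{SL₂(K)} is the one-dimensional span of the commutator [x₂,x₁], which corresponds to the tuple (−x₁, x₀).) -/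
open MvPolynomial

private lemma fin2_ext {m m' : Fin 2 →₀ ℕ} (h0 : m 0 = m' 0) (h1 : m 1 = m' 1) : m = m' := by
  ext i
  fin_cases i <;> assumption

private lemma monomial_fin2 {K : Type*} [CommRing K] (m : Fin 2 →₀ ℕ) (c : K) :
    (monomial m c : MvPolynomial (Fin 2) K) = C c * X 0 ^ m 0 * X 1 ^ m 1 := by
  rw [monomial_eq, Finsupp.prod_fintype, Fin.prod_univ_two, mul_assoc]
  intro i; exact pow_zero _

private lemma coeff_aeval_scale {K : Type*} [CommRing K] (t u : K)
    (w : MvPolynomial (Fin 2) K) (m : Fin 2 →₀ ℕ) :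
    coeff m (aeval ![C t * X 0, C u * X 1] w) = t ^ m 0 * u ^ m 1 * coeff m w := by
  induction w using MvPolynomial.induction_on' with
  | add p q hp hq => simp only [map_add, coeff_add, hp, hq, mul_add]
  | monomial m' c =>
      have key : (aeval ![C t * X 0, C u * X 1] (monomial m' c) : MvPolynomial (Fin 2) K)
          = monomial m' (t ^ m' 0 * u ^ m' 1 * c) := by
        rw [aeval_monomial, Finsupp.prod_fintype, Fin.prod_univ_two, monomial_fin2]
        · simp only [Matrix.cons_val_zero, Matrix.cons_val_one, Matrix.head_cons,
            algebraMap_eq, mul_pow, ← C_pow, C_mul]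
          ring
        · intro i; exact pow_zero _
      rw [key, coeff_monomial, coeff_monomial]
      split
      · next h => subst h; ring
      · simp

private lemma coeff_aeval_TT {K : Type*} [CommRing K] (m' : Fin 2 →₀ ℕ) (c : K) (n : ℕ) :
    (aeval ![(Polynomial.X : Polynomial K), Polynomial.X] (monomial m' c)).coeff n
      = if m' 0 + m' 1 = n then c else 0 := by
  rw [aeval_monomial, Finsupp.prod_fintype, Fin.prod_univ_two]
  · simp only [Matrix.cons_val_zero, Matrix.cons_val_one, Matrix.head_cons, ← pow_add,
      Polynomial.algebraMap_eq, Polynomial.coeff_C_mul, Polynomial.coeff_X_pow, mul_ite,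
      mul_one, mul_zero]
    exact if_congr eq_comm rfl rfl
  · intro i; exact pow_zero _

private lemma coeff_aeval_T0 {K : Type*} [CommRing K] (m' : Fin 2 →₀ ℕ) (c : K) (n : ℕ)
    (hn : n ≠ 0) (h : m' 0 = m' 1) :
    (aeval ![(Polynomial.X : Polynomial K), 0] (monomial m' c)).coeff n = 0 := by
  rw [aeval_monomial, Finsupp.prod_fintype, Fin.prod_univ_two]
  · rcases Nat.eq_zero_or_pos (m' 1) with h1 | h1
    · have h0 : m' 0 = 0 := by omega
      simp [h0, h1, Polynomial.algebraMap_eq, Polynomial.coeff_C, hn]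
    · simp [zero_pow (by omega : m' 1 ≠ 0)]
  · intro i; exact pow_zero _

/-- When `KX₂ ≅ V₁`, the space `(F₂′)^{SL₂(K)}` is one-dimensional, spanned by the
commutator `[x₂,x₁]`: a tuple `v = (v₀,v₁)` of polynomials with `x₀v₀ + x₁v₁ = 0`
(Shmel'kin's identification of `F₂′`) fixed by every element of `SL₂(K)` is a scalar
multiple of the tuple `(−x₁, x₀)` corresponding to `[x₂,x₁]`. -/
theorem stmt_14 {K : Type*} [Field K] [CharZero K]
    (v : Fin 2 → MvPolynomial (Fin 2) K)
    (hrel : X 0 * v 0 + X 1 * v 1 = 0)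
    (hinv : ∀ a b c d : K, a * d - b * c = 1 →
      C a * aeval ![C a * X 0 + C c * X 1, C b * X 0 + C d * X 1] (v 0) +
        C b * aeval ![C a * X 0 + C c * X 1, C b * X 0 + C d * X 1] (v 1) = v 0 ∧
      C c * aeval ![C a * X 0 + C c * X 1, C b * X 0 + C d * X 1] (v 0) +
        C d * aeval ![C a * X 0 + C c * X 1, C b * X 0 + C d * X 1] (v 1) = v 1) :
    ∃ lam : K, v 0 = -(C lam * X 1) ∧ v 1 = C lam * X 0 := by
  -- X 0 is prime
  have hX0prime : Prime (X 0 : MvPolynomial (Fin 2) K) := by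
    rw [← MulEquiv.prime_iff (MvPolynomial.finSuccEquiv K 1).toMulEquiv]
    have : (MvPolynomial.finSuccEquiv K 1).toMulEquiv (X 0) = Polynomial.X := by
      simpa using MvPolynomial.finSuccEquiv_X_zero (R := K) (n := 1)
    rw [this]
    exact Polynomial.prime_X
  -- extract w with v 1 = X 0 * w, v 0 = -(X 1 * w)
  have hdvd : (X 0 : MvPolynomial (Fin 2) K) ∣ X 1 * v 1 :=
    ⟨-(v 0), by linear_combination hrel⟩
  have hndvd : ¬ (X 0 : MvPolynomial (Fin 2) K) ∣ X 1 := by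
    rintro ⟨q, hq⟩
    have := congrArg (eval fun i : Fin 2 => if i = 0 then (0 : K) else 1) hq
    simp at this
  obtain ⟨w, hw⟩ := (hX0prime.2.2 _ _ hdvd).resolve_left hndvd
  have hv0 : v 0 = -(X 1 * w) := by
    apply mul_left_cancel₀ (X_ne_zero (R := K) (0 : Fin 2))
    linear_combination hrel - X 1 * hw
  -- invariance of w
  have hw_inv : ∀ a b c d : K, a * d - b * c = 1 →
      aeval ![C a * X 0 + C c * X 1, C b * X 0 + C d * X 1] w = w := by
    intro a b c d h
    have h1 := (hinv a b c d h).1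
    rw [hv0, hw] at h1
    simp only [map_neg, map_mul, aeval_X, Matrix.cons_val_zero, Matrix.cons_val_one,
      Matrix.head_cons] at h1
    have hC : (C a * C d - C b * C c : MvPolynomial (Fin 2) K) = 1 := by
      rw [← C_mul, ← C_mul, ← C_sub, h, C_1]
    apply mul_left_cancel₀ (X_ne_zero (R := K) (1 : Fin 2))
    linear_combination (-1 : MvPolynomial (Fin 2) K) * h1
      - (X 1 * aeval ![C a * X 0 + C c * X 1, C b * X 0 + C d * X 1] w) * hC
  -- scaling invariance : exponents are balanced
  have hscale := hw_inv 2 0 0 (2 : K)⁻¹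
    (by rw [mul_inv_cancel₀ (two_ne_zero (α := K))]; ring)
  simp only [map_zero, zero_mul, add_zero, zero_add] at hscale
  have hsupp : ∀ m ∈ w.support, m 0 = m 1 := by
    intro m hm
    have hc := coeff_aeval_scale (2 : K) (2 : K)⁻¹ w m
    rw [hscale] at hc
    have hcm : coeff m w ≠ 0 := mem_support_iff.mp hm
    have hr : (2 : K) ^ m 0 * (2 : K)⁻¹ ^ m 1 = 1 :=
      mul_right_cancel₀ hcm (by linear_combination -hc)
    have h2m : (2 : K) ^ m 0 = (2 : K) ^ m 1 := by
      rw [inv_pow, mul_inv_eq_one₀ (pow_ne_zero _ two_ne_zero)] at hr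
      exact hr
    have hcast : ((2 ^ m 0 : ℕ) : K) = ((2 ^ m 1 : ℕ) : K) := by push_cast; exact h2m
    exact Nat.pow_right_injective (le_refl 2) (Nat.cast_injective hcast)
  -- shear invariance
  have hsh := hw_inv 1 1 0 1 (by ring)
  simp only [map_one, map_zero, one_mul, zero_mul, add_zero, zero_add] at hsh
  have hAB : (MvPolynomial.aeval (R := K) ![(Polynomial.X : Polynomial K), 0]).comp
      (aeval ![X 0, X 0 + X 1]) = aeval ![(Polynomial.X : Polynomial K), Polynomial.X] := by
    rw [MvPolynomial.comp_aeval]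
    congr 1
    funext i
    fin_cases i <;> simp
  have hE : aeval ![(Polynomial.X : Polynomial K), Polynomial.X] w
      = aeval ![(Polynomial.X : Polynomial K), 0] w := by
    rw [← hAB]
    simp only [AlgHom.comp_apply, hsh]
  -- support is {0}
  have hzero : ∀ m ∈ w.support, m = (0 : Fin 2 →₀ ℕ) := by
    intro m hm
    by_contra hne
    set k := m 0 with hk
    have hm1 : m 1 = k := (hsupp m hm).symm
    have hkpos : k ≠ 0 := by
      intro h0
      exact hne (fin2_ext (by simp [← hk, h0]) (by simp [hm1, h0]))
    have hL : (aeval ![(Polynomial.X : Polynomial K), Polynomial.X] w).coeff (2 * k)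
        = coeff m w := by
      conv_lhs => rw [w.as_sum]
      rw [map_sum, Polynomial.finset_sum_coeff]
      rw [Finset.sum_eq_single m]
      · rw [coeff_aeval_TT, if_pos (by omega)]
      · intro m' hm' hne'
        rw [coeff_aeval_TT, if_neg]
        intro habs
        have h01 := hsupp m' hm'
        apply hne'
        apply fin2_ext <;> omega
      · intro h; exact absurd hm h
    have hR : (aeval ![(Polynomial.X : Polynomial K), 0] w).coeff (2 * k) = 0 := by
      conv_lhs => rw [w.as_sum]
      rw [map_sum, Polynomial.finset_sum_coeff]
      apply Finset.sum_eq_zero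
      intro m' hm'
      exact coeff_aeval_T0 m' _ _ (by omega) (hsupp m' hm')
    have := congrArg (fun p => Polynomial.coeff p (2 * k)) hE
    simp only [hL, hR] at this
    exact mem_support_iff.mp hm this
  have hwC : w = C (coeff 0 w) := by
    ext m
    rw [coeff_C]
    split
    · next h => subst h; rfl
    · next h =>
        by_contra h'
        exact h ((hzero m (mem_support_iff.mpr h')).symm ▸ rfl)
  obtain ⟨lam, hlam⟩ : ∃ lam, w = C lam := ⟨coeff 0 w, hwC⟩
  refine ⟨lam, ?_, ?_⟩
  · rw [hv0, hlam]; ring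
  · rw [hw, hlam]; ring
end

section
/- Let K be a field of characteristic 0. Consider the tuple c = (x₂x₃, −2x₁x₃, x₀x₃, 2x₁² − 2x₀x₂) of polynomials in K[x₀,x₁,x₂,x₃]. Then Σ_{i=0}^3 x_i c_i = 0, and for every (a b; c d) ∈ SL₂(K), writing σ for the substitution x₀ ↦ a²x₀ + 2ac x₁ + c²x₂, x₁ ↦ ab x₀ + (ad+bc)x₁ + cd x₂, x₂ ↦ b²x₀ + 2bd x₁ + d²x₂, x₃ ↦ x₃, and M for the 4×4 block-diagonal matrix with the V₂-block (columns (a²,2ac,c²), (ab,ad+bc,cd), (b²,2bd,d²)) and the 1×1 block (1), one has Σ_i M_{j i} σ(c_i) = c_j for all j. (That is, v₂₀ = 2[x₄,x₂,x₂] − [x₄,x₁,x₃] − [x₄,x₃,x₁] is a nonzero SL₂(K)-invariant in F₄′ when KX₄ ≅ V₂ ⊕ V₀.) -/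
open MvPolynomial

/-- The element `v₂₀ = 2[x₄,x₂,x₂] − [x₄,x₁,x₃] − [x₄,x₃,x₁]`, encoded via Shmel'kin's
embedding as the tuple `c = (x₂x₃, −2x₁x₃, x₀x₃, 2x₁² − 2x₀x₂)`, satisfies
`Σ_i x_i c_i = 0` and is an `SL₂(K)`-invariant in `F₄′` when `KX₄ ≅ V₂ ⊕ V₀`. -/
theorem stmt_16 {K : Type*} [Field K] [CharZero K] :
    let v : Fin 4 → MvPolynomial (Fin 4) K :=
      ![X 2 * X 3, -2 * X 1 * X 3, X 0 * X 3, 2 * X 1 ^ 2 - 2 * X 0 * X 2]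
    (∑ i, X i * v i = 0) ∧
    (∀ a b c d : K, a * d - b * c = 1 →
      ∀ j, ∑ i, C ((![![a ^ 2, a * b, b ^ 2, 0],
                      ![2 * a * c, a * d + b * c, 2 * b * d, 0],
                      ![c ^ 2, c * d, d ^ 2, 0],
                      ![0, 0, 0, 1]] : Fin 4 → Fin 4 → K) j i) *
        aeval ![C (a ^ 2) * X 0 + C (2 * a * c) * X 1 + C (c ^ 2) * X 2,
                C (a * b) * X 0 + C (a * d + b * c) * X 1 + C (c * d) * X 2,
                C (b ^ 2) * X 0 + C (2 * b * d) * X 1 + C (d ^ 2) * X 2,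
                X 3] (v i) = v j) := by
  intro v
  constructor
  · rw [Fin.sum_univ_four]
    simp only [v, Matrix.cons_val_zero, Matrix.cons_val_one, Matrix.head_cons,
      Matrix.cons_val_two, Matrix.tail_cons, Matrix.cons_val_three]
    ring
  · intro a b c d h j
    have h' : (C a * C d - C b * C c : MvPolynomial (Fin 4) K) = 1 := by
      rw [← map_mul, ← map_mul, ← map_sub, h, map_one]
    fin_cases j <;>
    · simp [v, Fin.sum_univ_four, map_ofNat]
      first
      | linear_combination ((C a * C d - C b * C c + 1) * (X 2 * X 3) :
          MvPolynomial (Fin 4) K) * h'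
      | linear_combination ((C a * C d - C b * C c + 1) * (-2 * X 1 * X 3) :
          MvPolynomial (Fin 4) K) * h'
      | linear_combination ((C a * C d - C b * C c + 1) * (X 0 * X 3) :
          MvPolynomial (Fin 4) K) * h'
      | linear_combination ((C a * C d - C b * C c + 1) * (2 * X 1 ^ 2 - 2 * X 0 * X 2) :
          MvPolynomial (Fin 4) K) * h'
end

section
/- Let K be a field of characteristic 0. Consider the tuple c = (−x₃, 3x₂, −3x₁, x₀) of polynomials in K[x₀,x₁,x₂,x₃]. Then Σ_{i=0}^3 x_i c_i = 0, and for every (a b; c d) ∈ SL₂(K), writing σ for the binary cubic substitution x₀ ↦ a³x₀ + 3a²c x₁ + 3ac² x₂ + c³x₃, x₁ ↦ a²b x₀ + (a²d + 2abc) x₁ + (2acd + bc²) x₂ + c²d x₃, x₂ ↦ ab² x₀ + (2abd + b²c) x₁ + (ad² + 2bcd) x₂ + cd² x₃, x₃ ↦ b³x₀ + 3b²d x₁ + 3bd² x₂ + d³x₃, and M for the matrix whose columns are given by these same formulas, one has Σ_i M_{j i} σ(c_i) = c_j for all j. (That is, v = [x₄,x₁] − 3[x₃,x₂] is a nonzero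 SL₂(K)-invariant generating the free cyclic K[X₄]^{SL₂(K)}-module (F₄′)^{SL₂(K)} when KX₄ ≅ V₃.) -/
open MvPolynomial

private lemma vmk0 {α : Type*} (a b c d : α) (h : 0 < 4) : ![a,b,c,d] ⟨0,h⟩ = a := rfl
private lemma vmk1 {α : Type*} (a b c d : α) (h : 1 < 4) : ![a,b,c,d] ⟨1,h⟩ = b := rfl
private lemma vmk2 {α : Type*} (a b c d : α) (h : 2 < 4) : ![a,b,c,d] ⟨2,h⟩ = c := rfl
private lemma vmk3 {α : Type*} (a b c d : α) (h : 3 < 4) : ![a,b,c,d] ⟨3,h⟩ = d := rfl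

/-- The element `v = [x₄,x₁] − 3[x₃,x₂]`, encoded via Shmel'kin's embedding as the
tuple `c = (−x₃, 3x₂, −3x₁, x₀)`, satisfies `Σ_i x_i c_i = 0` and is an
`SL₂(K)`-invariant in `F₄′` when `KX₄ ≅ V₃` (binary cubic forms); it generates the
free cyclic `K[X₄]^{SL₂(K)}`-module `(F₄′)^{SL₂(K)}`. -/
theorem stmt_18 {K : Type*} [Field K] [CharZero K] :
    let v : Fin 4 → MvPolynomial (Fin 4) K := ![-X 3, 3 * X 2, -3 * X 1, X 0]
    (∑ i, X i * v i = 0) ∧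
    (∀ a b c d : K, a * d - b * c = 1 →
      ∀ j, ∑ i, C ((![![a ^ 3, a ^ 2 * b, a * b ^ 2, b ^ 3],
                      ![3 * a ^ 2 * c, a ^ 2 * d + 2 * a * b * c,
                        2 * a * b * d + b ^ 2 * c, 3 * b ^ 2 * d],
                      ![3 * a * c ^ 2, 2 * a * c * d + b * c ^ 2,
                        a * d ^ 2 + 2 * b * c * d, 3 * b * d ^ 2],
                      ![c ^ 3, c ^ 2 * d, c * d ^ 2, d ^ 3]] : Fin 4 → Fin 4 → K) j i) *
        aeval ![C (a ^ 3) * X 0 + C (3 * a ^ 2 * c) * X 1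
                  + C (3 * a * c ^ 2) * X 2 + C (c ^ 3) * X 3,
                C (a ^ 2 * b) * X 0 + C (a ^ 2 * d + 2 * a * b * c) * X 1
                  + C (2 * a * c * d + b * c ^ 2) * X 2 + C (c ^ 2 * d) * X 3,
                C (a * b ^ 2) * X 0 + C (2 * a * b * d + b ^ 2 * c) * X 1
                  + C (a * d ^ 2 + 2 * b * c * d) * X 2 + C (c * d ^ 2) * X 3,
                C (b ^ 3) * X 0 + C (3 * b ^ 2 * d) * X 1
                  + C (3 * b * d ^ 2) * X 2 + C (d ^ 3) * X 3] (v i) = v j) := by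

  intro v
  refine ⟨by simp only [v, Fin.sum_univ_four, Matrix.cons_val_zero, Matrix.cons_val_one,
      Matrix.head_cons, Matrix.cons_val_two, Matrix.tail_cons, Matrix.cons_val_three]; ring, ?_⟩
  intro a b c d h j
  have hC : (C a * C d - C b * C c : MvPolynomial (Fin 4) K) = 1 := by
    rw [← C_mul, ← C_mul, ← C_sub, h, C_1]
  set e : MvPolynomial (Fin 4) K := C a * C d - C b * C c with he
  fin_cases j <;>
    simp only [v, Fin.sum_univ_four, Matrix.cons_val_zero, Matrix.cons_val_one,
      Matrix.head_cons, Matrix.cons_val_two, Matrix.tail_cons, Matrix.cons_val_three,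
      vmk0, vmk1, vmk2, vmk3,
      map_add, map_mul, map_neg, map_pow, map_ofNat, C_mul, C_add, C_pow, aeval_X]
  · linear_combination ((e^2 + e + 1) * (-X 3 : MvPolynomial (Fin 4) K)) * hC
  · linear_combination ((e^2 + e + 1) * (3 * X 2 : MvPolynomial (Fin 4) K)) * hC
  · linear_combination ((e^2 + e + 1) * (-3 * X 1 : MvPolynomial (Fin 4) K)) * hC
  · linear_combination ((e^2 + e + 1) * (X 0 : MvPolynomial (Fin 4) K)) * hC
end
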